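/- Let (M^n, g) be a Riemannian manifold with a ξ-parallel (α,ξ)-connection ∇. Then the Ricci tensors satisfy Ric(X,Y) = Ric^g(X,Y) + ((n-1)α² + ξ(α)) g(X,Y) + (n-2) X(α) g(Y,ξ), and the scalar curvatures satisfy κ = κ^g + n(n-1)α² + 2(n-1)ξ(α). -/

import Mathlib

/-- Ricci and scalar curvature of a `ξ`-parallel `(α,ξ)`-connection:
`Ric(X,Y) = Ric^g(X,Y) + ((n-1)α² + ξ(α)) g(X,Y) + (n-2) X(α) g(Y,ξ)` and
`κ = κ^g + n(n-1)α² + 2(n-1) ξ(α)`, with the conventions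
`R_{XY}Z = ∇_{[X,Y]}Z - ∇_X∇_Y Z + ∇_Y∇_X Z`,
`Ric(X,Y) = -∑ᵢ g(R_{eᵢX}Y, eᵢ)` for an orthonormal frame `{eᵢ}`, and
`κ = ∑ᵢ Ric(eᵢ,eᵢ)`. -/
theorem stmt_11
    {F : Type*} [CommRing F] {Vf : Type*} [AddCommGroup Vf] [Module F Vf]
    (n : ℕ)
    (D : Vf → F → F)
    (hD_mul : ∀ (X : Vf) (f h : F), D X (f * h) = D X f * h + f * D X h)
    (hD_addf : ∀ (X : Vf) (f h : F), D X (f + h) = D X f + D X h)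
    (hD_smulX : ∀ (c : F) (X : Vf) (f : F), D (c • X) f = c * D X f)
    (hD_addX : ∀ (X Y : Vf) (f : F), D (X + Y) f = D X f + D Y f)
    (g : Vf → Vf → F)
    (hg_sym : ∀ X Y, g X Y = g Y X)
    (hg_smul : ∀ (c : F) (X Y : Vf), g (c • X) Y = c * g X Y)
    (hg_add : ∀ X X' Y : Vf, g (X + X') Y = g X Y + g X' Y)
    (covg : Vf → Vf → Vf)
    (hmetric : ∀ X Y Z, D X (g Y Z) = g (covg X Y) Z + g Y (covg X Z))
    (hLeib : ∀ (X : Vf) (f : F) (Y : Vf), covg X (f • Y) = D X f • Y + f • covg X Y)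
    (hadd : ∀ X Y Z : Vf, covg X (Y + Z) = covg X Y + covg X Z)
    (hten_smul : ∀ (f : F) (X Y : Vf), covg (f • X) Y = f • covg X Y)
    (hten_add : ∀ X X' Y : Vf, covg (X + X') Y = covg X Y + covg X' Y)
    (lie : Vf → Vf → Vf)
    (htorsionfree : ∀ X Y, covg X Y - covg Y X = lie X Y)
    (ξ : Vf) (hξ : g ξ ξ = 1) (α : F)
    (S : Vf → Vf → Vf)
    (hS : ∀ X Y, S X Y = α • (g Y ξ • X - g X Y • ξ))
    (cov : Vf → Vf → Vf)
    (hcov : ∀ X Y, cov X Y = covg X Y - S X Y)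
    (hpar : ∀ X, cov X ξ = 0)
    -- a global orthonormal frame
    (e : Fin n → Vf)
    (horth : ∀ i j, g (e i) (e j) = if i = j then 1 else 0)
    (hframe : ∀ X : Vf, X = ∑ i, g X (e i) • e i)
    (R Rg : Vf → Vf → Vf → Vf)
    (hR : ∀ X Y Z, R X Y Z = cov (lie X Y) Z - cov X (cov Y Z) + cov Y (cov X Z))
    (hRg : ∀ X Y Z, Rg X Y Z = covg (lie X Y) Z - covg X (covg Y Z) + covg Y (covg X Z))
    (Ric Ricg : Vf → Vf → F) (κ κg : F)
    (hRic : ∀ X Y, Ric X Y = -∑ i, g (R (e i) X Y) (e i))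
    (hRicg : ∀ X Y, Ricg X Y = -∑ i, g (Rg (e i) X Y) (e i))
    (hκ : κ = ∑ i, Ric (e i) (e i))
    (hκg : κg = ∑ i, Ricg (e i) (e i)) :
    (∀ X Y, Ric X Y
        = Ricg X Y + (((n : F) - 1) * (α * α) + D ξ α) * g X Y
          + ((n : F) - 2) * D X α * g Y ξ) ∧
    κ = κg + (n : F) * ((n : F) - 1) * (α * α) + 2 * ((n : F) - 1) * D ξ α := by
  -- metric lemmas
  have hg0 : ∀ Y : Vf, g 0 Y = 0 := by
    intro Y
    have h := hg_smul 0 0 Y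
    rw [zero_smul, zero_mul] at h
    exact h
  have hg_smul' : ∀ (c : F) (X Y : Vf), g X (c • Y) = c * g X Y := by
    intro c X Y; rw [hg_sym, hg_smul, hg_sym]
  have hg_add' : ∀ X Y Z : Vf, g X (Y + Z) = g X Y + g X Z := by
    intro X Y Z; rw [hg_sym, hg_add, hg_sym Y X, hg_sym Z X]
  have hgsub : ∀ X Y Z : Vf, g (X - Y) Z = g X Z - g Y Z := by
    intro X Y Z
    have h : X - Y = X + (-1 : F) • Y := by module
    rw [h, hg_add, hg_smul]; ring
  have hgsub' : ∀ X Y Z : Vf, g X (Y - Z) = g X Y - g X Z := by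
    intro X Y Z; rw [hg_sym, hgsub, hg_sym Y X, hg_sym Z X]
  -- derivation lemmas
  have hD1 : ∀ X : Vf, D X (1 : F) = 0 := by
    intro X
    have h := hD_mul X 1 1
    rw [one_mul, mul_one, one_mul] at h
    exact (left_eq_add.mp h)
  have hD0 : ∀ X : Vf, D X (0 : F) = 0 := by
    intro X
    have h := hD_addf X 0 0
    rw [add_zero] at h
    exact (left_eq_add.mp h)
  have hDneg1 : ∀ X : Vf, D X (-1 : F) = 0 := by
    intro X
    have h := hD_addf X 1 (-1)
    rw [add_neg_cancel, hD0, hD1, zero_add] at h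
    exact h.symm
  have hD0X : ∀ f : F, D (0 : Vf) f = 0 := by
    intro f
    have h := hD_smulX 0 0 f
    rw [zero_smul, zero_mul] at h
    exact h
  -- connection lemmas
  have hcsub : ∀ X A B : Vf, covg X (A - B) = covg X A - covg X B := by
    intro X A B
    have h : A - B = A + (-1 : F) • B := by module
    rw [h, hadd, hLeib, hDneg1]
    module
  have htsub : ∀ A B Y : Vf, covg (A - B) Y = covg A Y - covg B Y := by
    intro A B Y
    have h : A - B = A + (-1 : F) • B := by module
    rw [h, hten_add, hten_smul]
    module
  have hcovξ : ∀ W : Vf, covg W ξ = α • W - (α * g W ξ) • ξ := by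
    intro W
    have h := hpar W
    rw [hcov, sub_eq_zero] at h
    rw [h, hS, hξ]
    module
  -- sums over the frame
  have hg_sumF : ∀ (s : Finset (Fin n)) (c : Fin n → F) (Y : Vf),
      g (∑ i ∈ s, c i • e i) Y = ∑ i ∈ s, c i * g (e i) Y := by
    intro s c Y
    induction s using Finset.induction_on with
    | empty => simpa using hg0 Y
    | insert _ _ ha ih =>
      rw [Finset.sum_insert ha, Finset.sum_insert ha, hg_add, hg_smul, ih]
  have hD_sumF : ∀ (s : Finset (Fin n)) (c : Fin n → F) (f : F),
      D (∑ i ∈ s, c i • e i) f = ∑ i ∈ s, c i * D (e i) f := by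
    intro s c f
    induction s using Finset.induction_on with
    | empty => simpa using hD0X f
    | insert _ _ ha ih =>
      rw [Finset.sum_insert ha, Finset.sum_insert ha, hD_addX, hD_smulX, ih]
  have S1 : ∀ X : Vf, D X α = ∑ i, g X (e i) * D (e i) α := by
    intro X
    conv_lhs => rw [hframe X]
    rw [hD_sumF]
  have S2 : ∀ X Y : Vf, g X Y = ∑ i, g X (e i) * g (e i) Y := by
    intro X Y
    conv_lhs => rw [hframe X]
    rw [hg_sumF]
  have S3 : ∑ i, g (e i) (e i) = (n : F) := by
    simp [horth]
  -- the key curvature comparison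
  have key : ∀ U X Y : Vf, R U X Y = Rg U X Y
      + (D U α * g Y ξ + α * α * g U Y) • X
      - (D X α * g Y ξ + α * α * g X Y) • U
      + (D X α * g U Y - D U α * g X Y) • ξ := by
    intro U X Y
    have c1 : ∀ A B : Vf, cov A B = covg A B - (α * g B ξ) • A + (α * g A B) • ξ := by
      intro A B; rw [hcov, hS]; module
    have hlie : lie U X = covg U X - covg X U := (htorsionfree U X).symm
    rw [hR, hRg, c1 (lie U X) Y, c1 U (cov X Y), c1 X (cov U Y), c1 X Y, c1 U Y, hlie]
    simp only [hadd, hcsub, htsub, hLeib, hcovξ, hD_mul, hmetric,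
      hg_add, hg_smul, hg_add', hg_smul', hgsub, hgsub', hξ]
    simp only [hg_sym]
    module
  -- Ricci comparison
  have ric : ∀ X Y : Vf, Ric X Y
      = Ricg X Y + (((n : F) - 1) * (α * α) + D ξ α) * g X Y
        + ((n : F) - 2) * D X α * g Y ξ := by
    intro X Y
    rw [hRic, hRicg]
    have h1 : ∀ i, g (R (e i) X Y) (e i) = g (Rg (e i) X Y) (e i)
        + g Y ξ * (g X (e i) * D (e i) α) + (α * α) * (g X (e i) * g (e i) Y)
        - (D X α * g Y ξ + α * α * g X Y) * g (e i) (e i)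
        + D X α * (g ξ (e i) * g (e i) Y) - g X Y * (g ξ (e i) * D (e i) α) := by
      intro i
      rw [key (e i) X Y]
      simp only [hg_add, hgsub, hg_smul]
      ring
    rw [show (∑ i, g (R (e i) X Y) (e i)) = ∑ i, (g (Rg (e i) X Y) (e i)
        + g Y ξ * (g X (e i) * D (e i) α) + (α * α) * (g X (e i) * g (e i) Y)
        - (D X α * g Y ξ + α * α * g X Y) * g (e i) (e i)
        + D X α * (g ξ (e i) * g (e i) Y) - g X Y * (g ξ (e i) * D (e i) α))
      from Finset.sum_congr rfl fun i _ => h1 i]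
    simp only [Finset.sum_add_distrib, Finset.sum_sub_distrib, ← Finset.mul_sum]
    rw [← S1 X, ← S2 X Y, ← S2 ξ Y, ← S1 ξ, S3, hg_sym ξ Y]
    ring
  refine ⟨ric, ?_⟩
  rw [hκ, hκg]
  have h2 : ∀ i, Ric (e i) (e i) = Ricg (e i) (e i)
      + (((n : F) - 1) * (α * α) + D ξ α) * g (e i) (e i)
      + ((n : F) - 2) * (g ξ (e i) * D (e i) α) := by
    intro i
    rw [ric (e i) (e i), hg_sym (e i) ξ]
    ring
  rw [show (∑ i, Ric (e i) (e i)) = ∑ i, (Ricg (e i) (e i)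
      + (((n : F) - 1) * (α * α) + D ξ α) * g (e i) (e i)
      + ((n : F) - 2) * (g ξ (e i) * D (e i) α))
    from Finset.sum_congr rfl fun i _ => h2 i]
  simp only [Finset.sum_add_distrib, ← Finset.mul_sum]
  rw [S3, ← S1 ξ]
  ring
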